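/- Let T : X → X be a continuous map of a compact metric space, μ a T-invariant Borel probability measure, and U a finite Borel cover of X. Then h_μ⁻(T, U) ≤ h_top(T, U), where h_μ⁻(T,U) = lim_n (1/n) H_μ(⋁_{i=0}^{n-1}T⁻ⁱU) and h_top(T,U) = lim_n (1/n) log N(⋁_{i=0}^{n-1}T⁻ⁱU). -/

import Mathlib

open MeasureTheory Set Filter Topology

noncomputable section

/-- `U` is a cover of the whole space. -/
def IsCover {X : Type*} (U : Finset (Set X)) : Prop := ⋃₀ (U : Set (Set X)) = Set.univ

/-- `R` refines `U`: every element of `R` is contained in some element of `U`. -/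
def Refines {X : Type*} (R U : Finset (Set X)) : Prop := ∀ A ∈ R, ∃ B ∈ U, A ⊆ B

/-- `R` is a partition of the whole space. -/
def IsPartition {X : Type*} (R : Finset (Set X)) : Prop :=
  IsCover R ∧ ∀ A ∈ R, ∀ B ∈ R, A ≠ B → Disjoint A B

/-- `R` is a partition into Borel (measurable) sets. -/
def IsBorelPartition {X : Type*} [MeasurableSpace X] (R : Finset (Set X)) : Prop :=
  IsPartition R ∧ ∀ A ∈ R, MeasurableSet A

/-- Join of two finite families of sets: `U ∨ V = {A ∩ B}`. -/
def coverJoin {X : Type*} (U V : Finset (Set X)) : Finset (Set X) :=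
  letI := Classical.decEq (Set X)
  (U ×ˢ V).image fun p => p.1 ∩ p.2

/-- Preimage of a finite family of sets under a map. -/
def coverPre {Y X : Type*} (g : Y → X) (U : Finset (Set X)) : Finset (Set Y) :=
  letI := Classical.decEq (Set Y)
  U.image fun A => g ⁻¹' A

/-- `dynJoin T U n = ⋁_{i=0}^{n-1} T⁻ⁱ U`. -/
def dynJoin {X : Type*} (T : X → X) (U : Finset (Set X)) : ℕ → Finset (Set X)
  | 0 => {Set.univ}
  | n + 1 => coverJoin (dynJoin T U n) (coverPre (T^[n]) U)

/-- Minimal cardinality of a subcover of `W`. -/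
def coverNum {X : Type*} (W : Finset (Set X)) : ℕ :=
  sInf {n | ∃ F : Finset (Set X), F ⊆ W ∧ F.card = n ∧ ⋃₀ (F : Set (Set X)) = Set.univ}

/-- Shannon entropy of a finite family of sets (convention `0 log 0 = 0`). -/
def partEnt {X : Type*} [MeasurableSpace X] (μ : Measure X) (R : Finset (Set X)) : ℝ :=
  -∑ A ∈ R, (μ A).toReal * Real.log (μ A).toReal

/-- Entropy of a cover: infimum of entropies of Borel partitions refining it. -/
def coverEnt {X : Type*} [MeasurableSpace X] (μ : Measure X) (U : Finset (Set X)) : ℝ :=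
  sInf {h | ∃ R : Finset (Set X), IsBorelPartition R ∧ Refines R U ∧ h = partEnt μ R}

end


section Aux

open Real

variable {X : Type*}

/-- Jensen bound: entropy of a probability vector indexed by a finset of sets is at most
`log` of the cardinality. -/
lemma partEnt_le_log_card [MeasurableSpace X] (μ : Measure X) (R : Finset (Set X))
    (hle : ∀ A ∈ R, (μ A).toReal ≤ 1)
    (hsum : ∑ A ∈ R, (μ A).toReal = 1) :
    partEnt μ R ≤ Real.log R.card := by
  classical
  have hRne : R.Nonempty := by
    by_contra h
    rw [Finset.not_nonempty_iff_eq_empty] at h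
    simp [h] at hsum
  set n : ℕ := R.card with hn
  have hnpos : 0 < n := Finset.card_pos.mpr hRne
  have hn0 : (n : ℝ) ≠ 0 := Nat.cast_ne_zero.mpr hnpos.ne'
  have hpent : partEnt μ R = ∑ A ∈ R, Real.negMulLog ((μ A).toReal) := by
    unfold partEnt
    rw [← Finset.sum_neg_distrib]
    refine Finset.sum_congr rfl fun A _ => ?_
    simp [Real.negMulLog]
  have hjensen := Real.concaveOn_negMulLog.le_map_sum
    (t := R) (w := fun _ => (n : ℝ)⁻¹) (p := fun A => (μ A).toReal)
    (fun _ _ => by positivity)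
    (by rw [Finset.sum_const, nsmul_eq_mul, ← hn, mul_inv_cancel₀ hn0])
    (fun A _ => ENNReal.toReal_nonneg)
  have hsum' : ∑ A ∈ R, (n : ℝ)⁻¹ • (μ A).toReal = (n : ℝ)⁻¹ := by
    rw [← Finset.smul_sum, hsum, smul_eq_mul, mul_one]
  rw [hsum'] at hjensen
  have hval : Real.negMulLog ((n : ℝ)⁻¹) = (n : ℝ)⁻¹ * Real.log n := by
    rw [Real.negMulLog, Real.log_inv]
    ring
  rw [hval] at hjensen
  have : (n : ℝ) * ∑ A ∈ R, (n : ℝ)⁻¹ • Real.negMulLog ((μ A).toReal)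
      ≤ (n : ℝ) * ((n : ℝ)⁻¹ * Real.log n) := by
    exact mul_le_mul_of_nonneg_left hjensen (Nat.cast_nonneg n)
  rw [← mul_assoc, mul_inv_cancel₀ hn0, one_mul, Finset.mul_sum] at this
  calc partEnt μ R = ∑ A ∈ R, Real.negMulLog ((μ A).toReal) := hpent
    _ = ∑ A ∈ R, (n : ℝ) * ((n : ℝ)⁻¹ • Real.negMulLog ((μ A).toReal)) := by
        refine Finset.sum_congr rfl fun A _ => ?_
        rw [smul_eq_mul, ← mul_assoc, mul_inv_cancel₀ hn0, one_mul]
    _ ≤ Real.log n := this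

/-- Disjointification: any finite measurable cover admits a Borel partition refining it,
with no more elements. -/
lemma exists_partition_of_cover [MeasurableSpace X] (F : Finset (Set X))
    (hFc : IsCover F) (hFb : ∀ A ∈ F, MeasurableSet A) :
    ∃ R : Finset (Set X), IsBorelPartition R ∧ Refines R F ∧ R.card ≤ F.card := by
  classical
  set l : List (Set X) := F.toList with hl
  have hlen : l.length = F.card := F.length_toList
  have hmem : ∀ i : Fin l.length, l.get i ∈ F := fun i => by
    have h1 : l.get i ∈ l := by
      have := l.get_mem i
      simpa using this
    exact Finset.mem_toList.mp h1
  set f : Fin l.length → Set X :=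
    fun i => l.get i \ ⋃ j : Fin l.length, ⋃ (_ : (j : ℕ) < (i : ℕ)), l.get j with hf
  set R : Finset (Set X) := Finset.image f Finset.univ with hR
  have hfd : ∀ i j : Fin l.length, (i : ℕ) < (j : ℕ) → Disjoint (f i) (f j) := by
    intro i j hij
    rw [Set.disjoint_left]
    intro x hxi hxj
    have h1 : x ∈ l.get i := hxi.1
    exact hxj.2 (Set.mem_iUnion.mpr ⟨i, Set.mem_iUnion.mpr ⟨hij, h1⟩⟩)
  refine ⟨R, ⟨⟨?_, ?_⟩, ?_⟩, ?_, ?_⟩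
  · -- cover
    rw [IsCover, Set.eq_univ_iff_forall]
    intro x
    have hx : x ∈ ⋃₀ (F : Set (Set X)) := by rw [hFc]; trivial
    obtain ⟨A, hA, hxA⟩ := hx
    obtain ⟨i, hi⟩ : ∃ i : Fin l.length, x ∈ l.get i := by
      have : A ∈ l := by rw [hl, Finset.mem_toList]; exact hA
      obtain ⟨i, hi⟩ := List.get_of_mem this
      exact ⟨i, hi ▸ hxA⟩
    have hex : ∃ k : ℕ, ∃ h : k < l.length, x ∈ l.get ⟨k, h⟩ := ⟨i, i.2, hi⟩
    classical
    set k := Nat.find hex with hk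
    obtain ⟨hklt, hxk⟩ := Nat.find_spec hex
    refine Set.mem_sUnion.mpr ⟨f ⟨k, hklt⟩, ?_, ?_⟩
    · exact Finset.mem_coe.mpr (Finset.mem_image.mpr ⟨⟨k, hklt⟩, Finset.mem_univ _, rfl⟩)
    · refine ⟨hxk, ?_⟩
      intro hmem'
      obtain ⟨j, hj⟩ := Set.mem_iUnion.mp hmem'
      obtain ⟨hjk, hxj⟩ := Set.mem_iUnion.mp hj
      exact Nat.find_min hex hjk ⟨j.2, by simpa using hxj⟩
  · -- disjoint
    intro A hA B hB hAB
    obtain ⟨i, _, rfl⟩ := Finset.mem_image.mp hA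
    obtain ⟨j, _, rfl⟩ := Finset.mem_image.mp hB
    rcases lt_trichotomy (i : ℕ) (j : ℕ) with h | h | h
    · exact hfd i j h
    · exact absurd (congrArg f (Fin.ext h)) hAB
    · exact (hfd j i h).symm
  · -- measurable
    intro A hA
    obtain ⟨i, _, rfl⟩ := Finset.mem_image.mp hA
    exact (hFb _ (hmem i)).diff
      (MeasurableSet.iUnion fun j => MeasurableSet.iUnion fun _ => hFb _ (hmem j))
  · -- refines
    intro A hA
    obtain ⟨i, _, rfl⟩ := Finset.mem_image.mp hA
    exact ⟨l.get i, hmem i, Set.diff_subset⟩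
  · calc R.card ≤ (Finset.univ : Finset (Fin l.length)).card := Finset.card_image_le
      _ = l.length := by simp
      _ = F.card := hlen

lemma partEnt_nonneg [MeasurableSpace X] (μ : Measure X) [IsProbabilityMeasure μ]
    (R : Finset (Set X)) : 0 ≤ partEnt μ R := by
  unfold partEnt
  rw [← Finset.sum_neg_distrib]
  refine Finset.sum_nonneg fun A _ => ?_
  have h1 : (μ A).toReal ≤ 1 := by
    have := prob_le_one (μ := μ) (s := A)
    simpa using ENNReal.toReal_mono ENNReal.one_ne_top this
  have := Real.negMulLog_nonneg ENNReal.toReal_nonneg h1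
  simpa [Real.negMulLog, neg_mul] using this

/-- Key lemma: `coverEnt μ W ≤ log (coverNum W)` for a finite measurable cover. -/
lemma coverEnt_le_log_coverNum [MeasurableSpace X] (μ : Measure X) [IsProbabilityMeasure μ]
    (W : Finset (Set X)) (hWc : IsCover W) (hWb : ∀ A ∈ W, MeasurableSet A) :
    coverEnt μ W ≤ Real.log (coverNum W) := by
  classical
  have hne : {n | ∃ F : Finset (Set X), F ⊆ W ∧ F.card = n ∧
      ⋃₀ (F : Set (Set X)) = Set.univ}.Nonempty := ⟨W.card, W, le_refl _, rfl, hWc⟩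
  have hspec := Nat.sInf_mem hne
  obtain ⟨F, hFW, hFcard, hFcov⟩ := hspec
  obtain ⟨R, ⟨⟨hRc, hRd⟩, hRm⟩, hRref, hRcard⟩ :=
    exists_partition_of_cover F hFcov (fun A hA => hWb A (hFW hA))
  -- sum of measures of the partition is 1
  have hdisj : (R : Set (Set X)).PairwiseDisjoint id := by
    intro A hA B hB hAB
    exact hRd A hA B hB hAB
  have hmeas_sum : ∑ A ∈ R, μ A = 1 := by
    have h1 : μ (⋃ A ∈ R, id A) = ∑ A ∈ R, μ (id A) :=
      measure_biUnion_finset hdisj (fun A hA => hRm A hA)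
    simp only [id] at h1
    rw [← h1]
    have h2 : ⋃ A ∈ R, A = Set.univ := by
      rw [← hRc]; ext x; simp [Set.mem_sUnion]
    rw [h2]
    exact measure_univ
  have hsum : ∑ A ∈ R, (μ A).toReal = 1 := by
    rw [← ENNReal.toReal_sum (fun A _ => measure_ne_top μ A), hmeas_sum, ENNReal.toReal_one]
  have hle1 : ∀ A ∈ R, (μ A).toReal ≤ 1 := fun A _ => by
    have := prob_le_one (μ := μ) (s := A)
    simpa using ENNReal.toReal_mono ENNReal.one_ne_top this
  have hent := partEnt_le_log_card μ R hle1 hsum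
  have hRne : R.Nonempty := by
    by_contra h
    rw [Finset.not_nonempty_iff_eq_empty] at h
    simp [h] at hsum
  have hcard_le : Real.log R.card ≤ Real.log (coverNum W) := by
    apply Real.log_le_log (by exact_mod_cast Finset.card_pos.mpr hRne)
    exact_mod_cast hFcard ▸ hRcard
  have hmemS : partEnt μ R ∈ {h | ∃ R' : Finset (Set X), IsBorelPartition R' ∧ Refines R' W ∧
      h = partEnt μ R'} := by
    refine ⟨R, ⟨⟨hRc, hRd⟩, hRm⟩, ?_, rfl⟩
    intro A hA
    obtain ⟨B, hBF, hAB⟩ := hRref A hA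
    exact ⟨B, hFW hBF, hAB⟩
  have hbdd : BddBelow {h | ∃ R' : Finset (Set X), IsBorelPartition R' ∧ Refines R' W ∧
      h = partEnt μ R'} := by
    refine ⟨0, fun x hx => ?_⟩
    obtain ⟨R', _, _, rfl⟩ := hx
    exact partEnt_nonneg μ R'
  exact le_trans (csInf_le hbdd hmemS) (le_trans hent hcard_le)

lemma isCover_coverJoin {U V : Finset (Set X)} (hU : IsCover U) (hV : IsCover V) :
    IsCover (coverJoin U V) := by
  classical
  rw [IsCover, Set.eq_univ_iff_forall]
  intro x
  have hx1 : x ∈ ⋃₀ (U : Set (Set X)) := by rw [hU]; trivial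
  have hx2 : x ∈ ⋃₀ (V : Set (Set X)) := by rw [hV]; trivial
  obtain ⟨A, hA, hxA⟩ := hx1
  obtain ⟨B, hB, hxB⟩ := hx2
  refine Set.mem_sUnion.mpr ⟨A ∩ B, ?_, hxA, hxB⟩
  refine Finset.mem_coe.mpr ?_
  unfold coverJoin
  exact Finset.mem_image.mpr ⟨(A, B), Finset.mem_product.mpr ⟨hA, hB⟩, rfl⟩

lemma isCover_coverPre {Y : Type*} (g : Y → X) {U : Finset (Set X)} (hU : IsCover U) :
    IsCover (coverPre g U) := by
  classical
  rw [IsCover, Set.eq_univ_iff_forall]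
  intro y
  have : g y ∈ ⋃₀ (U : Set (Set X)) := by rw [hU]; trivial
  obtain ⟨A, hA, hyA⟩ := this
  refine Set.mem_sUnion.mpr ⟨g ⁻¹' A, ?_, hyA⟩
  refine Finset.mem_coe.mpr ?_
  unfold coverPre
  exact Finset.mem_image.mpr ⟨A, hA, rfl⟩

lemma isCover_dynJoin (T : X → X) (U : Finset (Set X)) (hU : IsCover U) (n : ℕ) :
    IsCover (dynJoin T U n) := by
  induction n with
  | zero => simp [dynJoin, IsCover]
  | succ n ih => exact isCover_coverJoin ih (isCover_coverPre _ hU)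

lemma measurable_dynJoin [MeasurableSpace X] [TopologicalSpace X] [BorelSpace X]
    (T : X → X) (hT : Continuous T) (U : Finset (Set X)) (hUb : ∀ A ∈ U, MeasurableSet A)
    (n : ℕ) : ∀ A ∈ dynJoin T U n, MeasurableSet A := by
  induction n with
  | zero => intro A hA; simp only [dynJoin, Finset.mem_singleton] at hA; simp [hA]
  | succ n ih =>
    intro A hA
    simp only [dynJoin] at hA
    unfold coverJoin at hA
    classical
    obtain ⟨⟨B, C⟩, hBC, rfl⟩ := Finset.mem_image.mp hA
    obtain ⟨hB, hC⟩ := Finset.mem_product.mp hBC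
    refine (ih B hB).inter ?_
    unfold coverPre at hC
    obtain ⟨D, hD, rfl⟩ := Finset.mem_image.mp hC
    exact (hT.iterate n).measurable (hUb D hD)

end Aux

theorem stmt8 {X : Type*} [MetricSpace X] [CompactSpace X]
    [MeasurableSpace X] [BorelSpace X]
    (T : X → X) (hT : Continuous T)
    (μ : Measure X) [IsProbabilityMeasure μ]
    (hinv : ∀ A : Set X, MeasurableSet A → μ (T ⁻¹' A) = μ A)
    (U : Finset (Set X)) (hUc : IsCover U) (hUb : ∀ A ∈ U, MeasurableSet A)
    (a b : ℝ)
    (ha : Tendsto (fun n : ℕ => coverEnt μ (dynJoin T U n) / n) atTop (nhds a))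
    (hb : Tendsto (fun n : ℕ => Real.log (coverNum (dynJoin T U n)) / n) atTop (nhds b)) :
    a ≤ b := by
  have key : ∀ n : ℕ, coverEnt μ (dynJoin T U n) / n ≤
      Real.log (coverNum (dynJoin T U n)) / n := by
    intro n
    exact div_le_div_of_nonneg_right (coverEnt_le_log_coverNum μ _
      (isCover_dynJoin T U hUc n) (measurable_dynJoin T hT U hUb n)) (Nat.cast_nonneg n)
  exact le_of_tendsto_of_tendsto' ha hb key
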